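/- arXiv:1004.1883 — 3 statements merged into one kernel-verified Lean document; each statement's English description precedes it below -/
import Mathlib

section
/- Let (φ_k)_{k≥0} be a sequence of real numbers with φ_0 > 0, let ρ : {1,2,3,…} → ℝ, let F(z) = ∑_{n≥1} ( ∑_{T plane tree, |T|=n} w_deg(T)·w_h(T) ) z^n, and set G(z) = φ(F(z)) = ∑_{k≥0} φ_k F(z)^k (the forest generating function, whose constant term is φ_0). Suppose (b_k)_{k≥1} is a sequence of real numbers such that ∑_{k≥1} b_k (φ(t) − φ_0)^k = t holds as an identity of formal power series in t (so s ↦ ∑_{k≥1} b_k (s−φ_0)^k is a compositional inverse of φ at φ_0). Then for every n ≥ 1, ρ(n)·[z^{n-1}]G(z) = [z^n] ∑_{k≥1} b_k (G(z) − φ_0)^k. -/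
/-- A plane tree (ordered rooted tree): a root together with a finite
sequence of plane trees (its root subtrees). -/
inductive PlaneTree : Type where
  | node : List PlaneTree → PlaneTree

namespace PlaneTree

/-- The size of a plane tree: its number of vertices. -/
def size : PlaneTree → ℕ
  | node ts => 1 + (ts.attach.map fun t => size t.1).sum
decreasing_by simp only [PlaneTree.node.sizeOf_spec]; have := List.sizeOf_lt_of_mem t.2; omega

/-- The degree weight `w_deg(T) = ∏_{v ∈ T} φ_{d(v)}`, where `d(v)` is the
out-degree of the vertex `v`. -/
noncomputable def degWeight (φ : ℕ → ℝ) : PlaneTree → ℝ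
  | node ts => φ ts.length * (ts.attach.map fun t => degWeight φ t.1).prod
decreasing_by simp only [PlaneTree.node.sizeOf_spec]; have := List.sizeOf_lt_of_mem t.2; omega

/-- The hook weight `w_h(T) = ∏_{v ∈ T} ρ(h_v)`, where the hook length `h_v`
is the number of vertices of the subtree of `T` rooted at `v`. -/
noncomputable def hookWeight (ρ : ℕ → ℝ) : PlaneTree → ℝ
  | node ts => ρ (size (node ts)) * (ts.attach.map fun t => hookWeight ρ t.1).prod
decreasing_by simp only [PlaneTree.node.sizeOf_spec]; have := List.sizeOf_lt_of_mem t.2; omega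

end PlaneTree

/-- Composition `∑_{k ≥ 0} c_k F^k` of a coefficient sequence `c` with a formal
power series `F` having zero constant term. -/
noncomputable def seriesComp (c : ℕ → ℝ) (F : PowerSeries ℝ) : PowerSeries ℝ :=
  PowerSeries.mk fun n => ∑ k ∈ Finset.range (n + 1), c k * (PowerSeries.coeff n) (F ^ k)

/-- Composition `∑_{k ≥ 1} b_k H^k` of a coefficient sequence `b` (indexed by `k ≥ 1`)
with a formal power series `H` having zero constant term. -/
noncomputable def seriesComp1 (b : ℕ → ℝ) (H : PowerSeries ℝ) : PowerSeries ℝ :=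
  PowerSeries.mk fun n => ∑ k ∈ Finset.Icc 1 n, b k * (PowerSeries.coeff n) (H ^ k)

namespace PlaneTree

lemma size_node (ts : List PlaneTree) : size (node ts) = 1 + (ts.map size).sum := by
  rw [size, List.attach_map_val]

lemma one_le_size (T : PlaneTree) : 1 ≤ T.size := by
  cases T with | node ts => rw [size_node]; omega

lemma degWeight_node (φ : ℕ → ℝ) (ts : List PlaneTree) :
    degWeight φ (node ts) = φ ts.length * (ts.map (degWeight φ)).prod := by
  rw [degWeight, List.attach_map_val]

lemma hookWeight_node (ρ : ℕ → ℝ) (ts : List PlaneTree) :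
    hookWeight ρ (node ts) = ρ (size (node ts)) * (ts.map (hookWeight ρ)).prod := by
  rw [hookWeight, List.attach_map_val]

/-- combined weight -/
noncomputable def wt (φ ρ : ℕ → ℝ) (T : PlaneTree) : ℝ := degWeight φ T * hookWeight ρ T

lemma wt_node (φ ρ : ℕ → ℝ) (ts : List PlaneTree) :
    wt φ ρ (node ts) = ρ (size (node ts)) * φ ts.length * (ts.map (wt φ ρ)).prod := by
  simp only [wt, degWeight_node, hookWeight_node]
  rw [show (ts.map (wt φ ρ)) = ts.map (fun t => degWeight φ t * hookWeight ρ t) from rfl,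
    List.prod_map_mul]
  ring

lemma length_le_sum_sizes (ts : List PlaneTree) : ts.length ≤ (ts.map size).sum := by
  induction ts with
  | nil => simp
  | cons t ts ih => simp only [List.map_cons, List.sum_cons, List.length_cons]
                    have := one_le_size t; omega

lemma finite_size_le (n : ℕ) : {T : PlaneTree | T.size ≤ n}.Finite := by
  induction n with
  | zero =>
    convert Set.finite_empty
    ext T; simp only [Set.mem_setOf_eq, Set.mem_empty_iff_false, iff_false]
    have := one_le_size T; omega
  | succ n ih =>
    haveI : Finite {T : PlaneTree | T.size ≤ n} := ih
    have hlists : {l : List {T : PlaneTree | T.size ≤ n} | l.length ≤ n}.Finite :=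
      List.finite_length_le _ n
    apply Set.Finite.subset ((hlists.image (fun l => node (l.map Subtype.val))))
    rintro ⟨ts⟩ hT
    simp only [Set.mem_setOf_eq, size_node] at hT
    have hmem : ∀ t ∈ ts, t.size ≤ n := by
      intro t ht
      have := List.single_le_sum (l := ts.map size) (by simp) t.size (List.mem_map_of_mem ht)
      omega
    refine ⟨ts.attach.map (fun t => ⟨t.1, hmem t.1 t.2⟩), ?_, ?_⟩
    · simp only [Set.mem_setOf_eq, List.length_map, List.length_attach]
      have := length_le_sum_sizes ts; omega
    · simp [List.map_map, Function.comp, List.attach_map_val]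

lemma finite_size_eq (n : ℕ) : {T : PlaneTree | T.size = n}.Finite :=
  (finite_size_le n).subset (fun T hT => le_of_eq hT)

instance (n : ℕ) : Finite {T : PlaneTree // T.size = n} := finite_size_eq n

end PlaneTree

open PowerSeries

section PS
variable (a b : ℕ → ℝ)

lemma coeff_seriesComp1 (H : PowerSeries ℝ) (n : ℕ) :
    coeff n (seriesComp1 b H) = ∑ k ∈ Finset.Icc 1 n, b k * coeff n (H ^ k) := by
  simp [seriesComp1]

lemma constantCoeff_seriesComp1 (H : PowerSeries ℝ) :
    constantCoeff (seriesComp1 b H) = 0 := by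
  rw [← coeff_zero_eq_constantCoeff_apply, coeff_seriesComp1]; simp

lemma coeff_pow_eq_zero {F : PowerSeries ℝ} (hF : constantCoeff F = 0)
    {m j : ℕ} (h : m < j) : coeff m (F ^ j) = 0 := by
  have h1 : (X : PowerSeries ℝ) ^ j ∣ F ^ j := pow_dvd_pow_of_dvd (X_dvd_iff.2 hF) j
  exact (X_pow_dvd_iff.1 h1) m h

lemma coeff_seriesComp1_trunc {F : PowerSeries ℝ} (hF : constantCoeff F = 0)
    {m N : ℕ} (hm : m ≤ N) :
    coeff m (seriesComp1 b F) = coeff m (∑ k ∈ Finset.Icc 1 N, C (b k) * F ^ k) := by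
  rw [coeff_seriesComp1, map_sum]
  simp only [coeff_C_mul]
  apply Finset.sum_subset
  · exact Finset.Icc_subset_Icc_right hm
  · intro k hk hk'
    simp only [Finset.mem_Icc] at hk hk'
    rw [coeff_pow_eq_zero hF (by omega), mul_zero]

lemma X_pow_dvd_seriesComp1_sub {F : PowerSeries ℝ} (hF : constantCoeff F = 0) (N : ℕ) :
    (X : PowerSeries ℝ) ^ (N + 1) ∣
      seriesComp1 a F - ∑ j ∈ Finset.Icc 1 N, C (a j) * F ^ j := by
  rw [X_pow_dvd_iff]
  intro m hm
  rw [map_sub, coeff_seriesComp1_trunc a hF (by omega : m ≤ N), sub_self]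

/-- polynomial `∑_{k=1}^N b_k (∑_{j=1}^N a_j t^j)^k` -/
noncomputable def qpoly (N : ℕ) : Polynomial ℝ :=
  ∑ k ∈ Finset.Icc 1 N, Polynomial.C (b k) *
    (∑ j ∈ Finset.Icc 1 N, Polynomial.C (a j) * Polynomial.X ^ j) ^ k

lemma qpoly_coeff_zero (N : ℕ) : (qpoly a b N).coeff 0 = 0 := by
  have h : ∀ p : Polynomial ℝ, p.coeff 0 = Polynomial.constantCoeff p := fun p => rfl
  rw [h, qpoly, map_sum]
  apply Finset.sum_eq_zero
  intro k hk
  simp only [Finset.mem_Icc] at hk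
  rw [map_mul, map_pow, map_sum]
  have : ∀ j ∈ Finset.Icc 1 N,
      Polynomial.constantCoeff (Polynomial.C (a j) * Polynomial.X ^ j) = 0 := by
    intro j hj
    simp only [Finset.mem_Icc] at hj
    rw [map_mul, map_pow]
    simp [zero_pow (by omega : j ≠ 0)]
  rw [Finset.sum_eq_zero this, zero_pow (by omega : k ≠ 0), mul_zero]

lemma key1 {F : PowerSeries ℝ} (hF : constantCoeff F = 0) {m N : ℕ} (hm : m ≤ N) :
    coeff m (seriesComp1 b (seriesComp1 a F))
      = coeff m (Polynomial.eval₂ C F (qpoly a b N)) := by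
  rw [coeff_seriesComp1_trunc b (constantCoeff_seriesComp1 a F) hm]
  have hdvd := X_pow_dvd_seriesComp1_sub a hF N
  set T : PowerSeries ℝ := ∑ j ∈ Finset.Icc 1 N, C (a j) * F ^ j with hT
  have step : coeff m (∑ k ∈ Finset.Icc 1 N, C (b k) * (seriesComp1 a F) ^ k)
      = coeff m (∑ k ∈ Finset.Icc 1 N, C (b k) * T ^ k) := by
    have hd : (X : PowerSeries ℝ) ^ (N + 1) ∣
        (∑ k ∈ Finset.Icc 1 N, C (b k) * (seriesComp1 a F) ^ k)
        - ∑ k ∈ Finset.Icc 1 N, C (b k) * T ^ k := by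
      rw [← Finset.sum_sub_distrib]
      apply Finset.dvd_sum
      intro k _
      rw [← mul_sub]
      exact Dvd.dvd.mul_left (hdvd.trans (sub_dvd_pow_sub_pow _ _ k)) _
    have h0 := X_pow_dvd_iff.1 hd m (by omega)
    rw [map_sub, sub_eq_zero] at h0
    exact h0
  rw [step]
  congr 1
  rw [qpoly, Polynomial.eval₂_finset_sum]
  apply Finset.sum_congr rfl
  intro k _
  rw [Polynomial.eval₂_mul, Polynomial.eval₂_C, Polynomial.eval₂_pow,
    Polynomial.eval₂_finset_sum]
  congr 2
  apply Finset.sum_congr rfl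
  intro j _
  rw [Polynomial.eval₂_mul, Polynomial.eval₂_C, Polynomial.eval₂_pow, Polynomial.eval₂_X]

end PS

section PS2
variable (a b : ℕ → ℝ)

lemma coeff_eval₂ (q : Polynomial ℝ) (hq : q.coeff 0 = 0) {F : PowerSeries ℝ}
    (hF : constantCoeff F = 0) (n : ℕ) :
    coeff n (Polynomial.eval₂ C F q)
      = ∑ m ∈ Finset.Icc 1 n, q.coeff m * coeff n (F ^ m) := by
  rw [Polynomial.eval₂_eq_sum, Polynomial.sum_def, map_sum]
  simp only [coeff_C_mul]
  have e1 : ∑ m ∈ q.support, q.coeff m * coeff n (F ^ m)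
      = ∑ m ∈ q.support ∪ Finset.Icc 1 n, q.coeff m * coeff n (F ^ m) := by
    apply Finset.sum_subset Finset.subset_union_left
    intro x _ hx
    rw [Polynomial.notMem_support_iff.1 hx, zero_mul]
  have e2 : ∑ m ∈ Finset.Icc 1 n, q.coeff m * coeff n (F ^ m)
      = ∑ m ∈ q.support ∪ Finset.Icc 1 n, q.coeff m * coeff n (F ^ m) := by
    apply Finset.sum_subset Finset.subset_union_right
    intro x _ hx
    simp only [Finset.mem_Icc] at hx
    rcases Nat.eq_zero_or_pos x with h0 | h0
    · rw [h0, hq, zero_mul]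
    · rw [coeff_pow_eq_zero hF (by omega), mul_zero]
  rw [e1, ← e2]

lemma coeff_eval₂_X (q : Polynomial ℝ) (hq : q.coeff 0 = 0) {m : ℕ} (hm : 1 ≤ m) :
    coeff m (Polynomial.eval₂ C (X : PowerSeries ℝ) q) = q.coeff m := by
  rw [coeff_eval₂ q hq constantCoeff_X m]
  rw [Finset.sum_eq_single m]
  · simp [coeff_X_pow]
  · intro j _ hj
    rw [coeff_X_pow, if_neg (fun h => hj h.symm), mul_zero]
  · intro h
    exact absurd (Finset.mem_Icc.2 ⟨hm, le_refl m⟩) h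

lemma mk_sub_C (φ : ℕ → ℝ) : PowerSeries.mk φ - C (φ 0) = seriesComp1 φ X := by
  ext n
  cases n with
  | zero => simp [seriesComp1, coeff_mk]
  | succ n =>
    rw [map_sub, coeff_mk, coeff_C, if_neg (by omega), sub_zero, seriesComp1, coeff_mk]
    rw [Finset.sum_eq_single (n + 1)]
    · simp [coeff_X_pow]
    · intro j _ hj
      rw [coeff_X_pow, if_neg (fun h => hj h.symm), mul_zero]
    · intro h
      exact absurd (Finset.mem_Icc.2 ⟨by omega, le_refl _⟩) h

lemma seriesComp_sub_C (c : ℕ → ℝ) (F : PowerSeries ℝ) :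
    seriesComp c F - C (c 0) = seriesComp1 c F := by
  ext n
  cases n with
  | zero => simp [seriesComp, seriesComp1, coeff_mk]
  | succ n =>
    rw [map_sub, coeff_C, if_neg (by omega), sub_zero, seriesComp, seriesComp1,
      coeff_mk, coeff_mk, Finset.sum_range_succ']
    rw [pow_zero, coeff_one, if_neg (by omega), mul_zero, add_zero]
    have hmap : Finset.Icc 1 (n+1) = Finset.map ⟨fun i => i + 1, fun i j h => Nat.add_right_cancel h⟩
        (Finset.range (n+1)) := by
      ext x
      simp only [Finset.mem_Icc, Finset.mem_map, Finset.mem_range, Function.Embedding.coeFn_mk]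
      constructor
      · rintro ⟨h1, h2⟩; exact ⟨x - 1, by omega, by show x - 1 + 1 = x; omega⟩
      · rintro ⟨a, ha, rfl⟩; show 1 ≤ a + 1 ∧ a + 1 ≤ n + 1; omega
    rw [hmap, Finset.sum_map]
    rfl

lemma comp_inverse (φ : ℕ → ℝ)
    (hb : seriesComp1 b (PowerSeries.mk φ - C (φ 0)) = X)
    {F : PowerSeries ℝ} (hF : constantCoeff F = 0) (n : ℕ) (hn : 1 ≤ n) :
    coeff n (seriesComp1 b (seriesComp φ F - C (φ 0))) = coeff n F := by
  rw [seriesComp_sub_C, key1 φ b hF (le_refl n),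
    coeff_eval₂ _ (qpoly_coeff_zero φ b n) hF]
  have hq : ∀ m, 1 ≤ m → m ≤ n → (qpoly φ b n).coeff m = (if m = 1 then (1:ℝ) else 0) := by
    intro m h1 h2
    rw [← coeff_eval₂_X _ (qpoly_coeff_zero φ b n) h1, ← key1 φ b constantCoeff_X h2,
      ← mk_sub_C φ, hb, coeff_X]
  rw [Finset.sum_congr rfl (fun m hm => by
    rw [hq m (Finset.mem_Icc.1 hm).1 (Finset.mem_Icc.1 hm).2])]
  rw [Finset.sum_eq_single 1]
  · simp
  · intro j _ hj
    rw [if_neg hj, zero_mul]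
  · intro h
    exact absurd (Finset.mem_Icc.2 ⟨le_refl _, hn⟩) h

end PS2

namespace PlaneTree
variable (φ ρ : ℕ → ℝ)

lemma finite_lists (k m : ℕ) :
    {l : List PlaneTree | l.length = k ∧ (l.map size).sum = m}.Finite := by
  haveI : Finite {T : PlaneTree | T.size ≤ m} := finite_size_le m
  have hlists : {l : List {T : PlaneTree | T.size ≤ m} | l.length ≤ k}.Finite :=
    List.finite_length_le _ k
  apply Set.Finite.subset (hlists.image (fun l => l.map Subtype.val))
  rintro ts ⟨hlen, hsum⟩
  have hmem : ∀ t ∈ ts, t.size ≤ m := by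
    intro t ht
    have := List.single_le_sum (l := ts.map size) (by simp) t.size (List.mem_map_of_mem ht)
    omega
  refine ⟨ts.attach.map (fun t => ⟨t.1, hmem t.1 t.2⟩), ?_, ?_⟩
  · simp only [Set.mem_setOf_eq, List.length_map, List.length_attach]
    exact hlen.le
  · simp [List.map_map, Function.comp, List.attach_map_val]

noncomputable def treeFinset (n : ℕ) : Finset PlaneTree := (finite_size_eq n).toFinset
noncomputable def listFinset (k m : ℕ) : Finset (List PlaneTree) := (finite_lists k m).toFinset

lemma mem_treeFinset {n : ℕ} {T : PlaneTree} : T ∈ treeFinset n ↔ T.size = n := by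
  simp [treeFinset, Set.Finite.mem_toFinset]

lemma mem_listFinset {k m : ℕ} {l : List PlaneTree} :
    l ∈ listFinset k m ↔ l.length = k ∧ (l.map size).sum = m := by
  simp [listFinset, Set.Finite.mem_toFinset]

/-- tree generating function -/
noncomputable def Ftree : PowerSeries ℝ := PowerSeries.mk fun n => ∑ T ∈ treeFinset n, wt φ ρ T

lemma coeff_Ftree (n : ℕ) : coeff n (Ftree φ ρ) = ∑ T ∈ treeFinset n, wt φ ρ T := coeff_mk _ _

lemma constantCoeff_Ftree : constantCoeff (Ftree φ ρ) = 0 := by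
  rw [← coeff_zero_eq_constantCoeff_apply, coeff_Ftree]
  have : treeFinset 0 = ∅ := by
    ext T
    simp only [mem_treeFinset, Finset.notMem_empty, iff_false]
    have := one_le_size T; omega
  rw [this, Finset.sum_empty]

lemma coeff_Ftree_pow (k m : ℕ) :
    coeff m (Ftree φ ρ ^ k) = ∑ l ∈ listFinset k m, (l.map (wt φ ρ)).prod := by
  induction k generalizing m with
  | zero =>
    rw [pow_zero, coeff_one]
    rcases Nat.eq_zero_or_pos m with rfl | hm
    · have : listFinset 0 0 = {[]} := by
        ext l
        simp only [mem_listFinset, Finset.mem_singleton, List.length_eq_zero_iff]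
        constructor
        · rintro ⟨rfl, -⟩; rfl
        · rintro rfl; simp
      rw [this]; simp
    · have : listFinset 0 m = ∅ := by
        ext l
        simp only [mem_listFinset, Finset.notMem_empty, iff_false, not_and]
        intro hl
        rw [List.length_eq_zero_iff] at hl
        subst hl
        simp; omega
      rw [this, if_neg (by omega), Finset.sum_empty]
  | succ k ih =>
    rw [pow_succ', coeff_mul]
    have e1 : ∀ p ∈ Finset.HasAntidiagonal.antidiagonal m,
        coeff p.1 (Ftree φ ρ) * coeff p.2 (Ftree φ ρ ^ k)
        = ∑ T ∈ treeFinset p.1, ∑ l ∈ listFinset k p.2, wt φ ρ T * (l.map (wt φ ρ)).prod := by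
      intro p _
      rw [coeff_Ftree, ih p.2, Finset.sum_mul_sum]
    rw [Finset.sum_congr rfl e1, Finset.sum_sigma', Finset.sum_sigma']
    apply Finset.sum_bij (fun x _ => x.1.2 :: x.2)
    · rintro ⟨⟨⟨p1, p2⟩, T⟩, l⟩ hx
      simp only [Finset.mem_sigma, Finset.HasAntidiagonal.mem_antidiagonal, mem_treeFinset,
        mem_listFinset] at hx
      obtain ⟨⟨hp, hT⟩, hl1, hl2⟩ := hx
      rw [mem_listFinset]
      refine ⟨by simp [hl1], ?_⟩
      simp only [List.map_cons, List.sum_cons]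
      omega
    · rintro ⟨⟨⟨p1, p2⟩, T⟩, l⟩ hx ⟨⟨⟨q1, q2⟩, T'⟩, l'⟩ hy h
      simp only [List.cons.injEq] at h
      obtain ⟨rfl, rfl⟩ := h
      simp only [Finset.mem_sigma, Finset.HasAntidiagonal.mem_antidiagonal, mem_treeFinset,
        mem_listFinset] at hx hy
      obtain ⟨⟨hp, hT⟩, hl1, hl2⟩ := hx
      obtain ⟨⟨hq, hT'⟩, hl1', hl2'⟩ := hy
      have h1 : p1 = q1 := by omega
      have h2 : p2 = q2 := by omega
      subst h1; subst h2
      rfl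
    · rintro l hl
      rw [mem_listFinset] at hl
      obtain ⟨hl1, hl2⟩ := hl
      match l with
      | t :: ts =>
        simp only [List.map_cons, List.sum_cons, List.length_cons] at hl1 hl2
        refine ⟨⟨⟨⟨t.size, (ts.map size).sum⟩, t⟩, ts⟩, ?_, rfl⟩
        refine Finset.mem_sigma.2 ⟨Finset.mem_sigma.2 ⟨Finset.HasAntidiagonal.mem_antidiagonal.2 ?_,
          mem_treeFinset.2 rfl⟩, mem_listFinset.2 ⟨by dsimp only; omega, rfl⟩⟩
        dsimp only
        omega
    · rintro ⟨⟨⟨p1, p2⟩, T⟩, l⟩ _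
      simp

lemma sum_treeFinset_eq {n : ℕ} (hn : 1 ≤ n) :
    ∑ T ∈ treeFinset n, wt φ ρ T
      = ρ n * ∑ k ∈ Finset.range n, φ k * ∑ l ∈ listFinset k (n-1), (l.map (wt φ ρ)).prod := by
  rw [Finset.mul_sum]
  have e1 : ∀ k ∈ Finset.range n, ρ n * (φ k * ∑ l ∈ listFinset k (n-1), (l.map (wt φ ρ)).prod)
      = ∑ l ∈ listFinset k (n-1), ρ n * φ k * (l.map (wt φ ρ)).prod := by
    intro k _
    rw [Finset.mul_sum, Finset.mul_sum]
    apply Finset.sum_congr rfl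
    intro l _
    ring
  rw [Finset.sum_congr rfl e1, Finset.sum_sigma']
  symm
  apply Finset.sum_bij (fun x _ => node x.2)
  · rintro ⟨k, l⟩ hx
    dsimp only at hx ⊢
    simp only [Finset.mem_sigma, Finset.mem_range, mem_listFinset] at hx
    obtain ⟨hk, hl1, hl2⟩ := hx
    rw [mem_treeFinset, size_node]
    omega
  · rintro ⟨k, l⟩ hx ⟨k', l'⟩ hy h
    dsimp only at h hx hy
    simp only [node.injEq] at h
    subst h
    simp only [Finset.mem_sigma, Finset.mem_range, mem_listFinset] at hx hy
    obtain ⟨hk, hl1, hl2⟩ := hx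
    obtain ⟨hk', hl1', hl2'⟩ := hy
    have : k = k' := by omega
    subst this
    rfl
  · rintro T hT
    rw [mem_treeFinset] at hT
    match T with
    | node ts =>
      rw [size_node] at hT
      have hlen := length_le_sum_sizes ts
      exact ⟨⟨ts.length, ts⟩, Finset.mem_sigma.2 ⟨Finset.mem_range.2 (by dsimp only; omega),
        mem_listFinset.2 ⟨rfl, by dsimp only; omega⟩⟩, rfl⟩
  · rintro ⟨k, l⟩ hx
    dsimp only at hx ⊢
    simp only [Finset.mem_sigma, Finset.mem_range, mem_listFinset] at hx
    obtain ⟨hk, hl1, hl2⟩ := hx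
    rw [wt_node, size_node, hl1, hl2, show 1 + (n - 1) = n from by omega]

lemma tsum_wt_eq (n : ℕ) (f : PlaneTree → ℝ) :
    ∑' T : {T : PlaneTree // T.size = n}, f T.1 = ∑ T ∈ treeFinset n, f T := by
  have h0 : ∑' (T : {T : PlaneTree // T.size = n}), f ↑T
      = ∑' (x : ({T : PlaneTree | T.size = n} : Set PlaneTree)), f ↑x := rfl
  rw [h0, tsum_subtype ({T : PlaneTree | T.size = n} : Set PlaneTree) f]
  rw [tsum_eq_sum (s := treeFinset n) (f := Set.indicator {T : PlaneTree | T.size = n} f) ?h]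
  · apply Finset.sum_congr rfl
    intro T hT
    exact Set.indicator_of_mem (by simpa [Set.mem_setOf_eq] using mem_treeFinset.1 hT) f
  · intro T hT
    exact Set.indicator_of_notMem (by simpa [Set.mem_setOf_eq] using
      (fun h => hT (mem_treeFinset.2 h))) f

end PlaneTree


/-- **Hook length formula for forests of simply generated trees.**
With `G(z) = φ(F(z))` the forest generating function and `b` the coefficient
sequence of a compositional inverse of `φ` at `φ₀` (i.e. `∑_{k≥1} b_k (φ(t) − φ₀)^k = t`),
for all `n ≥ 1`: `ρ(n)·[z^{n-1}]G(z) = [zⁿ] ∑_{k≥1} b_k (G(z) − φ₀)^k`. -/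
theorem hook_length_simply_generated_forests
    (φ : ℕ → ℝ) (hφ : 0 < φ 0) (ρ : ℕ → ℝ) (b : ℕ → ℝ)
    (hb : seriesComp1 b (PowerSeries.mk φ - PowerSeries.C (φ 0)) = PowerSeries.X)
    (F G : PowerSeries ℝ)
    (hF : F = PowerSeries.mk fun n =>
      ∑' T : {T : PlaneTree // T.size = n}, T.1.degWeight φ * T.1.hookWeight ρ)
    (hG : G = seriesComp φ F)
    (n : ℕ) (hn : 1 ≤ n) :
    ρ n * (PowerSeries.coeff (n - 1)) G
      = (PowerSeries.coeff n) (seriesComp1 b (G - PowerSeries.C (φ 0))) := by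

  have hFeq : F = PlaneTree.Ftree φ ρ := by
    rw [hF]
    ext i
    rw [coeff_mk, PlaneTree.coeff_Ftree]
    exact PlaneTree.tsum_wt_eq i (PlaneTree.wt φ ρ)
  have hFc : constantCoeff F = 0 := by
    rw [hFeq]; exact PlaneTree.constantCoeff_Ftree φ ρ
  rw [hG, comp_inverse b φ hb hFc n hn, hFeq]
  rw [seriesComp, coeff_mk, show n - 1 + 1 = n from by omega, PlaneTree.coeff_Ftree,
    PlaneTree.sum_treeFinset_eq φ ρ hn]
  congr 1
  apply Finset.sum_congr rfl
  intro k _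
  rw [PlaneTree.coeff_Ftree_pow]
end

section
/- Let ρ : {1,2,3,…} → ℝ, let F(z) = ∑_{n≥1} ( ∑_{T plane tree, |T|=n} (∏_{v∈T} 1/d(v)!)·(∏_{v∈T} ρ(h_v)) ) z^n, and let G(z) = exp(F(z)) = ∑_{k≥0} F(z)^k/k! (so G has constant term 1). Then for every n ≥ 1, ρ(n)·[z^{n-1}]G(z) = [z^n] log G(z), where log G := ∑_{k≥1} (−1)^{k+1} (G − 1)^k / k is the formal logarithm (well-defined since G − 1 has zero constant term). -/
/-- The formal logarithm `log G = ∑_{k≥1} (−1)^{k+1}(G−1)^k/k` of a formal power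
series `G` with constant term `1`. -/
noncomputable def seriesLog (G : PowerSeries ℝ) : PowerSeries ℝ :=
  seriesComp1 (fun k => (-1) ^ (k + 1) / k) (G - 1)

namespace HookAux
open PlaneTree

lemma size_node (ts : List PlaneTree) : (node ts).size = 1 + (ts.map size).sum := by
  rw [size]
  congr 1
  rw [← List.attach_map_val (l := ts) (f := size)]

lemma size_pos (T : PlaneTree) : 1 ≤ T.size := by
  cases T with
  | node ts => rw [size_node]; omega

lemma degWeight_node (φ : ℕ → ℝ) (ts : List PlaneTree) :
    (node ts).degWeight φ = φ ts.length * (ts.map (degWeight φ)).prod := by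
  rw [degWeight]
  congr 1
  rw [← List.attach_map_val (l := ts) (f := degWeight φ)]

lemma hookWeight_node (ρ : ℕ → ℝ) (ts : List PlaneTree) :
    (node ts).hookWeight ρ = ρ ((node ts).size) * (ts.map (hookWeight ρ)).prod := by
  rw [hookWeight]
  congr 1
  rw [← List.attach_map_val (l := ts) (f := hookWeight ρ)]

lemma len_le_fsize (l : List PlaneTree) : l.length ≤ (l.map size).sum := by
  induction l with
  | nil => simp
  | cons t ts ih => simp only [List.map_cons, List.sum_cons, List.length_cons]
                    have := size_pos t; omega

def children : PlaneTree → List PlaneTree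
  | node ts => ts

lemma node_children (T : PlaneTree) : node (children T) = T := by cases T; rfl

lemma size_children (T : PlaneTree) : T.size = 1 + ((children T).map size).sum := by
  cases T with | node ts => rw [size_node]; rfl

lemma finite_size_le : ∀ n : ℕ, Finite {T : PlaneTree // T.size ≤ n} := by
  intro n
  induction n with
  | zero =>
    have : IsEmpty {T : PlaneTree // T.size ≤ 0} :=
      ⟨fun ⟨T, h⟩ => by have := size_pos T; omega⟩
    infer_instance
  | succ n ih =>
    haveI : Finite {T : PlaneTree // T.size ≤ n} := ih
    haveI hfin : Finite {l : List {T : PlaneTree // T.size ≤ n} // l.length ≤ n} :=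
      (List.finite_length_le {T : PlaneTree // T.size ≤ n} n).to_subtype
    apply Finite.of_injective
      (β := {l : List {T : PlaneTree // T.size ≤ n} // l.length ≤ n})
      (fun T => ⟨(children T.1).attach.map (fun t =>
          (⟨t.1, by
            have hmem : size t.1 ∈ (children T.1).map size := List.mem_map_of_mem (f := size) t.2
            have h1 := List.le_sum_of_mem hmem
            have h2 := size_children T.1
            have h3 := T.2
            omega⟩ : {T : PlaneTree // T.size ≤ n})), by
        rw [List.length_map, List.length_attach]
        have h1 := len_le_fsize (children T.1)
        have h2 := size_children T.1
        have h3 := T.2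
        omega⟩)
    rintro ⟨T₁, h₁⟩ ⟨T₂, h₂⟩ h
    simp only [Subtype.mk.injEq] at h ⊢
    have hc : children T₁ = children T₂ := by
      have := congrArg (fun l : List {T : PlaneTree // T.size ≤ n} => l.map Subtype.val) h
      simpa [List.map_map, Function.comp, List.attach_map_val] using this
    rw [← node_children T₁, ← node_children T₂, hc]

instance finite_size_eq (n : ℕ) : Finite {T : PlaneTree // T.size = n} :=
  haveI := finite_size_le n
  Finite.of_injective (fun T => (⟨T.1, le_of_eq T.2⟩ : {T : PlaneTree // T.size ≤ n}))
    (fun a b h => by cases a; cases b; simpa using h)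

end HookAux


namespace HookAux
open PlaneTree PowerSeries

noncomputable def φE : ℕ → ℝ := fun k => ((Nat.factorial k : ℝ))⁻¹

noncomputable def w (ρ : ℕ → ℝ) (T : PlaneTree) : ℝ := T.degWeight φE * T.hookWeight ρ

noncomputable def wf (ρ : ℕ → ℝ) (l : List PlaneTree) : ℝ := (l.map (w ρ)).prod

def fsize (l : List PlaneTree) : ℕ := (l.map size).sum

abbrev Tr (n : ℕ) := {T : PlaneTree // T.size = n}
abbrev Fo (m : ℕ) := {l : List PlaneTree // fsize l = m}
abbrev FT (k m : ℕ) := {l : List PlaneTree // l.length = k ∧ fsize l = m}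

instance (m : ℕ) : Finite (Fo m) :=
  haveI := finite_size_le (m + 1)
  Finite.of_injective (β := {T : PlaneTree // T.size ≤ m + 1})
    (fun l => ⟨node l.1, by rw [size_node]; have := l.2; unfold fsize at this; omega⟩)
    (by rintro ⟨l₁, h₁⟩ ⟨l₂, h₂⟩ h
        simp only [Subtype.mk.injEq, node.injEq] at h
        exact Subtype.ext h)

instance (k m : ℕ) : Finite (FT k m) :=
  Finite.of_injective (β := Fo m) (fun l => ⟨l.1, l.2.2⟩)
    (by rintro ⟨l₁, h₁⟩ ⟨l₂, h₂⟩ h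
        simp only [Subtype.mk.injEq] at h
        exact Subtype.ext h)

noncomputable instance (n : ℕ) : Fintype (Tr n) := Fintype.ofFinite _
noncomputable instance (m : ℕ) : Fintype (Fo m) := Fintype.ofFinite _
noncomputable instance (k m : ℕ) : Fintype (FT k m) := Fintype.ofFinite _

lemma wf_nil (ρ : ℕ → ℝ) : wf ρ [] = 1 := rfl

lemma wf_cons (ρ : ℕ → ℝ) (t : PlaneTree) (l : List PlaneTree) :
    wf ρ (t :: l) = w ρ t * wf ρ l := by
  unfold wf; rw [List.map_cons, List.prod_cons]

lemma fsize_cons (t : PlaneTree) (l : List PlaneTree) :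
    fsize (t :: l) = t.size + fsize l := by
  unfold fsize; rw [List.map_cons, List.sum_cons]

lemma w_node (ρ : ℕ → ℝ) (ts : List PlaneTree) :
    w ρ (node ts) = φE ts.length * (ρ ((node ts).size) * wf ρ ts) := by
  unfold w wf
  rw [degWeight_node, hookWeight_node]
  have : (List.map (w ρ) ts).prod
      = (List.map (degWeight φE) ts).prod * (List.map (hookWeight ρ) ts).prod := by
    rw [← List.prod_map_mul]; rfl
  rw [this]; ring

end HookAux


namespace HookAux
open PlaneTree PowerSeries

noncomputable def Fgen (ρ : ℕ → ℝ) : PowerSeries ℝ :=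
  PowerSeries.mk fun n =>
    ∑' T : {T : PlaneTree // T.size = n},
      T.1.degWeight (fun k => ((Nat.factorial k : ℝ))⁻¹) * T.1.hookWeight ρ

lemma coeff_Fgen (ρ : ℕ → ℝ) (n : ℕ) :
    coeff n (Fgen ρ) = ∑ T : Tr n, w ρ T.1 := by
  rw [Fgen, coeff_mk, tsum_fintype]
  rfl

lemma constantCoeff_Fgen (ρ : ℕ → ℝ) : constantCoeff (Fgen ρ) = 0 := by
  rw [← coeff_zero_eq_constantCoeff_apply, coeff_Fgen]
  haveI : IsEmpty (Tr 0) := ⟨fun ⟨T, h⟩ => by have := size_pos T; omega⟩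
  simp

/-- prepending a tree to a forest, as an equivalence -/
noncomputable def consEquiv (k m : ℕ) :
    (Σ i : Fin (m + 1), Tr i.1 × FT k (m - i.1)) ≃ FT (k + 1) m :=
  Equiv.ofBijective
    (fun x => ⟨x.2.1.1 :: x.2.2.1,
      by rw [List.length_cons, x.2.2.2.1],
      by rw [fsize_cons, x.2.1.2, x.2.2.2.2]; have := x.1.2; omega⟩)
    (by
      constructor
      · rintro ⟨i₁, T₁, l₁⟩ ⟨i₂, T₂, l₂⟩ h
        have hv : T₁.1 :: l₁.1 = T₂.1 :: l₂.1 := congrArg Subtype.val h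
        simp only [List.cons.injEq] at hv
        have hi : i₁ = i₂ := Fin.ext (by rw [← T₁.2, ← T₂.2, hv.1])
        subst hi
        have hT : T₁ = T₂ := Subtype.ext hv.1
        have hl : l₁ = l₂ := Subtype.ext hv.2
        rw [hT, hl]
      · rintro ⟨l, hlen, hfs⟩
        cases l with
        | nil => simp at hlen
        | cons t ts =>
          rw [fsize_cons] at hfs
          rw [List.length_cons] at hlen
          refine ⟨⟨⟨t.size, by omega⟩, ⟨t, rfl⟩, ⟨ts, by omega, show fsize ts = m - t.size by omega⟩⟩, ?_⟩
          rfl)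

lemma coeff_Fgen_pow (ρ : ℕ → ℝ) (k m : ℕ) :
    coeff m (Fgen ρ ^ k) = ∑ l : FT k m, wf ρ l.1 := by
  induction k generalizing m with
  | zero =>
    rw [pow_zero, coeff_one]
    by_cases hm : m = 0
    · subst hm
      haveI : Unique (FT 0 0) :=
        { default := ⟨[], rfl, rfl⟩
          uniq := fun l => by
            apply Subtype.ext
            exact List.length_eq_zero_iff.mp l.2.1 }
      rw [if_pos rfl]
      rw [Finset.sum_congr rfl (fun (l : FT 0 0) _ => show wf ρ l.1 = 1 by
        rw [List.length_eq_zero_iff.mp l.2.1]; exact wf_nil ρ)]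
      rw [Finset.sum_const, Finset.card_univ, Fintype.card_unique]
      simp
    · haveI : IsEmpty (FT 0 m) :=
        ⟨fun l => by
          have h0 : l.1 = [] := List.length_eq_zero_iff.mp l.2.1
          have := l.2.2
          rw [h0] at this
          exact hm (by rw [← this]; rfl)⟩
      rw [if_neg hm, Finset.univ_eq_empty, Finset.sum_empty]
  | succ k ih =>
    rw [pow_succ, mul_comm, coeff_mul,
      Finset.Nat.sum_antidiagonal_eq_sum_range_succ_mk,
      ← Fin.sum_univ_eq_sum_range]
    have step : ∀ i : Fin (m + 1),
        coeff i.1 (Fgen ρ) * coeff (m - i.1) (Fgen ρ ^ k)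
          = ∑ x : Tr i.1 × FT k (m - i.1), w ρ x.1.1 * wf ρ x.2.1 := by
      intro i
      rw [coeff_Fgen, ih, Finset.sum_mul_sum]
      exact (Fintype.sum_prod_type' (f := fun (a : Tr i.1) (b : FT k (m - i.1)) => w ρ a.1 * wf ρ b.1)).symm
    rw [Finset.sum_congr rfl (fun i _ => step i)]
    rw [← Finset.sum_sigma (Finset.univ) (fun i : Fin (m+1) => (Finset.univ : Finset (Tr i.1 × FT k (m - i.1)))) (fun x => w ρ x.2.1.1 * wf ρ x.2.2.1)]
    refine Fintype.sum_equiv (consEquiv k m) _ _ (fun x => ?_)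
    rw [consEquiv]
    show _ = wf ρ (x.2.1.1 :: x.2.2.1)
    rw [wf_cons]

end HookAux


namespace HookAux
open PlaneTree PowerSeries

/-- grouping forests by length -/
noncomputable def lenEquiv (m : ℕ) : (Σ k : Fin (m + 1), FT k.1 m) ≃ Fo m :=
  Equiv.ofBijective (fun x => ⟨x.2.1, x.2.2.2⟩)
    (by
      constructor
      · rintro ⟨k₁, l₁⟩ ⟨k₂, l₂⟩ h
        have hv : l₁.1 = l₂.1 := congrArg Subtype.val h
        have hk : k₁ = k₂ := Fin.ext (by rw [← l₁.2.1, ← l₂.2.1, hv])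
        subst hk
        rw [Subtype.ext hv]
      · rintro ⟨l, hl⟩
        have hle : l.length ≤ m := hl ▸ len_le_fsize l
        exact ⟨⟨⟨l.length, by omega⟩, ⟨l, rfl, hl⟩⟩, rfl⟩)

lemma sum_Fo (ρ : ℕ → ℝ) (m : ℕ) :
    (∑ l : Fo m, φE l.1.length * wf ρ l.1)
      = ∑ k ∈ Finset.range (m + 1), φE k * (∑ l : FT k m, wf ρ l.1) := by
  rw [← Fin.sum_univ_eq_sum_range]
  have h1 : (∑ l : Fo m, φE (l.1 : List PlaneTree).length * wf ρ l.1)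
      = ∑ x : Σ k : Fin (m + 1), FT k.1 m,
          φE ((lenEquiv m x).1 : List PlaneTree).length * wf ρ (lenEquiv m x).1 :=
    (Equiv.sum_comp (lenEquiv m)
      (fun l : Fo m => φE (l.1 : List PlaneTree).length * wf ρ l.1)).symm
  rw [h1, ← Finset.univ_sigma_univ, Finset.sum_sigma]
  refine Finset.sum_congr rfl fun k _ => ?_
  rw [Finset.mul_sum]
  refine Finset.sum_congr rfl fun l _ => ?_
  have h2 : ((lenEquiv m) ⟨k, l⟩).1 = l.1 := rfl
  rw [h2, l.2.1]

lemma claimD (ρ : ℕ → ℝ) (n : ℕ) (hn : 1 ≤ n) :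
    coeff n (Fgen ρ)
      = ρ n * ∑ k ∈ Finset.range ((n - 1) + 1), φE k * coeff (n - 1) (Fgen ρ ^ k) := by
  have hbij : Function.Bijective (fun l : Fo (n - 1) =>
      (⟨node l.1, by
        rw [size_node]; have := l.2; unfold fsize at this; omega⟩ : Tr n)) := by
    constructor
    · rintro ⟨l₁, h₁⟩ ⟨l₂, h₂⟩ h
      simp only [Subtype.mk.injEq, node.injEq] at h
      exact Subtype.ext h
    · rintro ⟨T, hT⟩
      cases T with
      | node ts =>
        refine ⟨⟨ts, ?_⟩, rfl⟩
        rw [size_node] at hT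
        unfold fsize
        omega
  rw [coeff_Fgen]
  have main : (∑ l : Fo (n - 1), ρ n * (φE (l.1 : List PlaneTree).length * wf ρ l.1))
      = ∑ T : Tr n, w ρ T.1 :=
    Fintype.sum_bijective _ hbij _ _ (fun l => by
      show ρ n * _ = w ρ (node l.1)
      rw [w_node]
      have hs : (node (l.1 : List PlaneTree)).size = n := by
        rw [size_node]; have := l.2; unfold fsize at this; omega
      rw [hs]; ring)
  rw [← main, ← Finset.mul_sum, sum_Fo]
  congr 1
  refine Finset.sum_congr rfl (fun k _ => ?_)
  rw [coeff_Fgen_pow]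

end HookAux


namespace HookAux
open PowerSeries

lemma coeff_pow_eq_zero {F : PowerSeries ℝ} (hF : constantCoeff F = 0)
    {n k : ℕ} (h : n < k) : coeff n (F ^ k) = 0 :=
  X_pow_dvd_iff.mp (pow_dvd_pow_of_dvd (X_dvd_iff.mpr hF) k) n h

/-- truncated composition -/
noncomputable def SC (c : ℕ → ℝ) (F : PowerSeries ℝ) (N : ℕ) : PowerSeries ℝ :=
  ∑ k ∈ Finset.range (N + 1), C (c k) * F ^ k

noncomputable def SC1 (b : ℕ → ℝ) (H : PowerSeries ℝ) (N : ℕ) : PowerSeries ℝ :=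
  ∑ k ∈ Finset.Icc 1 N, C (b k) * H ^ k

lemma coeff_SC (c : ℕ → ℝ) (F : PowerSeries ℝ) (N n : ℕ) :
    coeff n (SC c F N) = ∑ k ∈ Finset.range (N + 1), c k * coeff n (F ^ k) := by
  rw [SC, map_sum]
  exact Finset.sum_congr rfl fun k _ => by rw [coeff_C_mul]

lemma coeff_SC1 (b : ℕ → ℝ) (H : PowerSeries ℝ) (N n : ℕ) :
    coeff n (SC1 b H N) = ∑ k ∈ Finset.Icc 1 N, b k * coeff n (H ^ k) := by
  rw [SC1, map_sum]
  exact Finset.sum_congr rfl fun k _ => by rw [coeff_C_mul]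

lemma coeff_seriesComp_eq {F : PowerSeries ℝ} (hF : constantCoeff F = 0)
    (c : ℕ → ℝ) {n N : ℕ} (hnN : n ≤ N) :
    coeff n (seriesComp c F) = coeff n (SC c F N) := by
  rw [coeff_SC, seriesComp, coeff_mk]
  refine Finset.sum_subset (by intro k hk; simp at hk ⊢; omega) ?_
  intro k hk hk'
  simp only [Finset.mem_range] at hk hk'
  rw [coeff_pow_eq_zero hF (by omega), mul_zero]

lemma coeff_seriesComp1_eq {H : PowerSeries ℝ} (hH : constantCoeff H = 0)
    (b : ℕ → ℝ) {n N : ℕ} (hnN : n ≤ N) :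
    coeff n (seriesComp1 b H) = coeff n (SC1 b H N) := by
  rw [coeff_SC1, seriesComp1, coeff_mk]
  refine Finset.sum_subset (by intro k hk; simp at hk ⊢; omega) ?_
  intro k hk hk'
  simp only [Finset.mem_Icc] at hk hk'
  rw [coeff_pow_eq_zero hH (by omega), mul_zero]

lemma coeff_mul_congr_left {A A' B : PowerSeries ℝ} {n : ℕ}
    (h : ∀ i ≤ n, coeff i A = coeff i A') :
    coeff n (A * B) = coeff n (A' * B) := by
  rw [coeff_mul, coeff_mul]
  refine Finset.sum_congr rfl fun p hp => ?_
  rw [h p.1 (Finset.HasAntidiagonal.antidiagonal.fst_le hp)]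

lemma coeff_mul_congr_right {A B B' : PowerSeries ℝ} {n : ℕ}
    (h : ∀ i ≤ n, coeff i B = coeff i B') :
    coeff n (A * B) = coeff n (A * B') := by
  rw [coeff_mul, coeff_mul]
  refine Finset.sum_congr rfl fun p hp => ?_
  rw [h p.2 (Finset.HasAntidiagonal.antidiagonal.snd_le hp)]

lemma deriv_SC (c : ℕ → ℝ) (F : PowerSeries ℝ) (N : ℕ) :
    d⁄dX ℝ (SC c F (N + 1)) = SC (fun j => c (j + 1) * (j + 1)) F N * d⁄dX ℝ F := by
  rw [SC, map_sum, Finset.sum_range_succ']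
  have h0 : d⁄dX ℝ (C (c 0) * F ^ 0) = 0 := by
    simp [Derivation.leibniz, smul_eq_mul]
  rw [h0, add_zero, SC, Finset.sum_mul]
  refine Finset.sum_congr rfl fun j _ => ?_
  rw [Derivation.leibniz, Derivation.leibniz_pow, derivative_C]
  simp only [smul_eq_mul, mul_zero, add_zero, nsmul_eq_mul, smul_zero]
  have hcast : C ((j : ℝ) + 1) = ((j : ℝ⟦X⟧) + 1) := by
    rw [map_add, map_one, map_natCast]
  push_cast
  rw [map_mul, hcast]
  ring

lemma SC1_eq_SC (b : ℕ → ℝ) (H : PowerSeries ℝ) (N : ℕ) :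
    SC1 b H N = SC (fun k => if k = 0 then 0 else b k) H N := by
  rw [SC1, SC]
  have h5 : ∑ k ∈ Finset.Icc 1 N, C (b k) * H ^ k
      = ∑ k ∈ Finset.Icc 1 N, C (if k = 0 then 0 else b k) * H ^ k :=
    Finset.sum_congr rfl fun k hk => by
      rw [if_neg (show ¬ k = 0 by simp at hk; omega)]
  rw [h5]
  refine Finset.sum_subset (by intro k hk; simp at hk ⊢; omega) ?_
  intro k hk hk'
  simp only [Finset.mem_Icc, Finset.mem_range] at hk hk'
  have hk0 : k = 0 := by omega
  rw [hk0]
  simp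

lemma deriv_SC1 (b : ℕ → ℝ) (H : PowerSeries ℝ) (N : ℕ) :
    d⁄dX ℝ (SC1 b H (N + 1)) = SC (fun j => b (j + 1) * (j + 1)) H N * d⁄dX ℝ H := by
  rw [SC1_eq_SC, deriv_SC]
  congr 1

lemma compDiff (c : ℕ → ℝ) (hc : ∀ j : ℕ, c (j + 1) * (j + 1) = c j)
    (F : PowerSeries ℝ) (hF : constantCoeff F = 0) :
    seriesComp c F * d⁄dX ℝ F = d⁄dX ℝ (seriesComp c F) := by
  ext n
  have h1 : coeff n (seriesComp c F * d⁄dX ℝ F) = coeff n (SC c F n * d⁄dX ℝ F) :=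
    coeff_mul_congr_left fun i hi => coeff_seriesComp_eq hF c hi
  have h2 : SC (fun j => c (j + 1) * (j + 1)) F n = SC c F n := by
    unfold SC
    exact Finset.sum_congr rfl fun k _ => by simp only [hc]
  rw [h1, ← h2, ← deriv_SC, coeff_derivative, coeff_derivative,
    coeff_seriesComp_eq hF c (le_refl (n + 1))]

lemma logDiff (H : PowerSeries ℝ) (hH : constantCoeff H = 0) :
    (1 + H) * d⁄dX ℝ (seriesComp1 (fun k => (-1) ^ (k + 1) / k) H) = d⁄dX ℝ H := by
  ext n
  set b : ℕ → ℝ := fun k => (-1) ^ (k + 1) / k with hb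
  have h1 : coeff n ((1 + H) * d⁄dX ℝ (seriesComp1 b H))
      = coeff n ((1 + H) * d⁄dX ℝ (SC1 b H (n + 1))) := by
    refine coeff_mul_congr_right fun i hi => ?_
    rw [coeff_derivative, coeff_derivative, coeff_seriesComp1_eq hH b (N := n + 1) (by omega)]
  have hbj : (fun j : ℕ => b (j + 1) * ((j : ℝ) + 1)) = fun j : ℕ => (-1 : ℝ) ^ j := by
    funext j
    rw [hb]
    have : ((j : ℝ) + 1) ≠ 0 := by positivity
    field_simp
    rw [pow_succ, pow_succ]
    push_cast
    ring
  have hSC : SC (fun j => b (j + 1) * (j + 1)) H n = ∑ k ∈ Finset.range (n + 1), (-H) ^ k := by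
    unfold SC
    refine Finset.sum_congr rfl fun k _ => ?_
    have h3 : b (k + 1) * ((k : ℝ) + 1) = (-1 : ℝ) ^ k := congrFun hbj k
    show C (b (k + 1) * ((k : ℝ) + 1)) * H ^ k = (-H) ^ k
    rw [h3, map_pow, map_neg, map_one]
    ring
  have hgeom : (1 + H) * (∑ k ∈ Finset.range (n + 1), (-H) ^ k) = 1 - (-H) ^ (n + 1) := by
    linear_combination -geom_sum_mul (-H) (n + 1)
  have hz : coeff n ((-H) ^ (n + 1) * d⁄dX ℝ H) = 0 := by
    have h4 : coeff n ((-H) ^ (n + 1) * d⁄dX ℝ H) = coeff n ((0 : ℝ⟦X⟧) * d⁄dX ℝ H) :=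
      coeff_mul_congr_left fun i hi => by
        rw [coeff_pow_eq_zero (by rw [map_neg, hH, neg_zero]) (by omega), map_zero]
    rw [h4, zero_mul, map_zero]
  rw [h1, deriv_SC1, hSC, ← mul_assoc, hgeom, sub_mul, one_mul, map_sub, hz, sub_zero]

end HookAux


namespace HookAux
open PowerSeries

lemma phi_succ (j : ℕ) : φE (j + 1) * (j + 1) = φE j := by
  unfold φE
  rw [Nat.factorial_succ]
  have h1 : ((j : ℝ) + 1) ≠ 0 := by positivity
  have h2 : ((Nat.factorial j : ℝ)) ≠ 0 := by
    exact_mod_cast Nat.factorial_ne_zero j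
  push_cast
  field_simp

lemma constantCoeff_seriesComp (c : ℕ → ℝ) (F : PowerSeries ℝ) :
    constantCoeff (seriesComp c F) = c 0 := by
  rw [← coeff_zero_eq_constantCoeff_apply, seriesComp, coeff_mk, Finset.sum_range_one,
    pow_zero, coeff_zero_eq_constantCoeff_apply, map_one, mul_one]

lemma constantCoeff_seriesComp1 (b : ℕ → ℝ) (H : PowerSeries ℝ) :
    constantCoeff (seriesComp1 b H) = 0 := by
  rw [← coeff_zero_eq_constantCoeff_apply, seriesComp1, coeff_mk]
  simp

lemma claimE (F : PowerSeries ℝ) (hF : constantCoeff F = 0) :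
    seriesLog (seriesComp φE F) = F := by
  set G := seriesComp φE F with hGdef
  have hG1 : constantCoeff G = 1 := by
    rw [hGdef, constantCoeff_seriesComp]
    simp [φE]
  have hH : constantCoeff (G - 1) = 0 := by
    rw [map_sub, map_one, hG1, sub_self]
  have hGF : G * d⁄dX ℝ F = d⁄dX ℝ G := compDiff φE phi_succ F hF
  have hlog : seriesLog G = seriesComp1 (fun k => (-1) ^ (k + 1) / k) (G - 1) := rfl
  have hGL : G * d⁄dX ℝ (seriesLog G) = d⁄dX ℝ G := by
    have h1 := logDiff (G - 1) hH
    have e1 : (1 : PowerSeries ℝ) + (G - 1) = G := by ring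
    have e2 : d⁄dX ℝ (G - 1) = d⁄dX ℝ G := by
      rw [map_sub, Derivation.map_one_eq_zero, sub_zero]
    rw [e1, e2, ← hlog] at h1
    exact h1
  have hGne : G ≠ 0 := fun h => by rw [h, map_zero] at hG1; exact zero_ne_one hG1
  have hd : d⁄dX ℝ (seriesLog G) = d⁄dX ℝ F :=
    mul_left_cancel₀ hGne (hGL.trans hGF.symm)
  exact PowerSeries.derivative.ext hd
    (by rw [hlog, constantCoeff_seriesComp1, hF])

end HookAux

/-- **Hook length formula for forests of labelled rooted trees** (forest version
with `φ(t) = eᵗ`, compositional inverse `φ^{[-1]}(t) = log t`). With `F` the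
generating function of plane trees weighted by `∏_v 1/d(v)!` and `∏_v ρ(h_v)`,
and `G = exp(F) = ∑_{k≥0} F^k/k!`, for all `n ≥ 1`:
`ρ(n)·[z^{n-1}]G(z) = [zⁿ] log G(z)`. -/
theorem hook_length_labelled_forests
    (ρ : ℕ → ℝ) (F G : PowerSeries ℝ)
    (hF : F = PowerSeries.mk fun n =>
      ∑' T : {T : PlaneTree // T.size = n},
        T.1.degWeight (fun k => ((Nat.factorial k : ℝ))⁻¹) * T.1.hookWeight ρ)
    (hG : G = seriesComp (fun k => ((Nat.factorial k : ℝ))⁻¹) F)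
    (n : ℕ) (hn : 1 ≤ n) :
    ρ n * (PowerSeries.coeff (n - 1)) G = (PowerSeries.coeff n) (seriesLog G) := by
  open HookAux PowerSeries in
  have hFg : F = Fgen ρ := hF
  have hGg : G = seriesComp φE F := hG
  have hF0 : PowerSeries.constantCoeff F = 0 := by
    rw [hFg]; exact constantCoeff_Fgen ρ
  have hE : seriesLog G = F := by
    rw [hGg, hFg, claimE (Fgen ρ) (by rw [← hFg]; exact hF0)]
  rw [hE, hFg, claimD ρ n hn]
  congr 1
  have hcoeff : PowerSeries.coeff (n - 1) G
      = ∑ k ∈ Finset.range ((n - 1) + 1), φE k * PowerSeries.coeff (n - 1) (Fgen ρ ^ k) := by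
    rw [hGg, hFg, seriesComp, PowerSeries.coeff_mk]
  rw [hcoeff]
end

section
/- Let α > 0 be a real number and let T be a formal power series over ℝ with zero constant term satisfying T'(z) · ∑_{k≥0} C(α,k)·(−1)^k·T(z)^k = 1, i.e. T' · (1−T)^α = 1 where (1−T)^α is defined by the binomial series (this is the formal version of the differential equation T'(z) = (1−T(z))^{−α} with T(0)=0). Then for every n ≥ 1, n!·[z^n]T(z) = (α+1)^{n-1}·(n−1)!·C(n−1−1/(α+1), n−1), where C(x,k) = x(x−1)⋯(x−k+1)/k! denotes the generalized binomial coefficient. In particular T(z) = 1 − (1−(α+1)z)^{1/(α+1)} as a formal binomial series. -/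
/-- The generalized binomial coefficient `C(x,k) = x(x−1)⋯(x−k+1)/k!` for real `x`. -/
noncomputable def genBinom (x : ℝ) (k : ℕ) : ℝ :=
  (∏ i ∈ Finset.range k, (x - i)) / Nat.factorial k

open PowerSeries Finset

/-- binomial coefficient sequence for `(1-H)^x` -/
noncomputable def bc (x : ℝ) : ℕ → ℝ := fun k => genBinom x k * (-1 : ℝ) ^ k

/-- partial sums -/
noncomputable def PartS (c : ℕ → ℝ) (H : PowerSeries ℝ) (N : ℕ) : PowerSeries ℝ :=
  ∑ k ∈ Finset.range N, PowerSeries.C (c k) * H ^ k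

lemma genBinom_zero (x : ℝ) : genBinom x 0 = 1 := by simp [genBinom]

lemma genBinom_pascal (x : ℝ) (k : ℕ) :
    genBinom (x + 1) (k + 1) = genBinom x (k + 1) + genBinom x k := by
  have h1 : ∏ i ∈ range (k+1), (x + 1 - i) = (x+1) * ∏ i ∈ range k, (x - i) := by
    rw [Finset.prod_range_succ']
    simp only [Nat.cast_add, Nat.cast_one, Nat.cast_zero]
    ring_nf
  have h2 : ∏ i ∈ range (k+1), (x - i) = (∏ i ∈ range k, (x - i)) * (x - k) :=
    Finset.prod_range_succ _ _
  have hk : (Nat.factorial (k+1) : ℝ) = (k+1) * Nat.factorial k := by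
    push_cast [Nat.factorial_succ]; ring
  have hkn : (Nat.factorial k : ℝ) ≠ 0 := Nat.cast_ne_zero.2 (Nat.factorial_ne_zero k)
  have hk1 : ((k:ℝ)+1) ≠ 0 := by positivity
  simp only [genBinom, h1, h2, hk]
  field_simp
  ring

lemma genBinom_mul_succ (x : ℝ) (k : ℕ) :
    ((k : ℝ) + 1) * genBinom x (k + 1) = x * genBinom (x - 1) k := by
  have h1 : ∏ i ∈ range (k+1), (x - i) = (∏ i ∈ range k, (x - 1 - i)) * x := by
    rw [Finset.prod_range_succ']
    simp only [Nat.cast_add, Nat.cast_one, Nat.cast_zero]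
    rw [Finset.prod_congr rfl (fun i _ => by ring : ∀ i ∈ range k, x - ((i:ℝ)+1) = x - 1 - i)]
    ring
  have hk : (Nat.factorial (k+1) : ℝ) = (k+1) * Nat.factorial k := by
    push_cast [Nat.factorial_succ]; ring
  have hkn : (Nat.factorial k : ℝ) ≠ 0 := Nat.cast_ne_zero.2 (Nat.factorial_ne_zero k)
  have hk1 : ((k:ℝ)+1) ≠ 0 := by positivity
  simp only [genBinom, h1, hk]
  field_simp

lemma bc_zero (x : ℝ) : bc x 0 = 1 := by simp [bc, genBinom_zero]

lemma bc_pascal (x : ℝ) (k : ℕ) : bc (x + 1) (k + 1) = bc x (k + 1) - bc x k := by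
  simp only [bc, genBinom_pascal, pow_succ]
  ring

lemma bc_deriv (x : ℝ) (k : ℕ) : bc x (k + 1) * ((k : ℝ) + 1) = -x * bc (x - 1) k := by
  simp only [bc, pow_succ]
  have h := genBinom_mul_succ x k
  calc genBinom x (k+1) * ((-1)^k * -1) * ((k:ℝ)+1)
      = -((((k:ℝ)+1) * genBinom x (k+1)) * (-1)^k) := by ring
    _ = -x * (genBinom (x-1) k * (-1)^k) := by rw [h]; ring

lemma coeff_pow_lt {H : PowerSeries ℝ} (hH : constantCoeff H = 0) {n k : ℕ} (h : n < k) :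
    coeff n (H ^ k) = 0 := by
  have hd : (X : ℝ⟦X⟧) ^ k ∣ H ^ k := pow_dvd_pow_of_dvd (X_dvd_iff.2 hH) k
  exact (X_pow_dvd_iff.1 hd) n h

lemma coeff_seriesComp_eq (c : ℕ → ℝ) {H : PowerSeries ℝ} (hH : constantCoeff H = 0)
    {n N : ℕ} (h : n < N) :
    coeff n (seriesComp c H) = coeff n (PartS c H N) := by
  rw [seriesComp, coeff_mk, PartS, map_sum]
  simp only [coeff_C_mul]
  apply Finset.sum_subset
  · exact Finset.range_subset_range.2 h
  · intro k hk hk'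
    rw [coeff_pow_lt hH, mul_zero]
    simpa using hk'

lemma coeff_mul_congr {A B B' : PowerSeries ℝ} {n : ℕ}
    (h : ∀ j ≤ n, coeff j B = coeff j B') :
    coeff n (A * B) = coeff n (A * B') := by
  have hd : (X : ℝ⟦X⟧) ^ (n + 1) ∣ B - B' := by
    rw [X_pow_dvd_iff]
    intro m hm
    rw [map_sub, h m (Nat.lt_succ_iff.1 hm), sub_self]
  have hd2 : (X : ℝ⟦X⟧) ^ (n + 1) ∣ A * B - A * B' := by
    rw [← mul_sub]; exact Dvd.dvd.mul_left hd A
  have := (X_pow_dvd_iff.1 hd2) n (Nat.lt_succ_self n)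
  rw [map_sub] at this
  linarith

lemma coeff_mul_seriesComp (A : PowerSeries ℝ) (c : ℕ → ℝ) {H : PowerSeries ℝ}
    (hH : constantCoeff H = 0) (n : ℕ) :
    coeff n (A * seriesComp c H) = coeff n (A * PartS c H (n + 1)) := by
  apply coeff_mul_congr
  intro j hj
  exact coeff_seriesComp_eq c hH (Nat.lt_succ_of_le hj)

lemma partS_succ (c : ℕ → ℝ) (H : PowerSeries ℝ) (N : ℕ) :
    PartS c H (N + 1) = PartS c H N + PowerSeries.C (c N) * H ^ N :=
  Finset.sum_range_succ _ _

lemma one_sub_mul_partS (x : ℝ) (H : PowerSeries ℝ) (N : ℕ) :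
    (1 - H) * PartS (bc x) H (N + 1)
      = PartS (bc (x + 1)) H (N + 1) - PowerSeries.C (bc x N) * H ^ (N + 1) := by
  induction N with
  | zero =>
      simp [PartS, bc_zero]
  | succ N ih =>
      rw [partS_succ (bc x) H (N+1), mul_add, ih, partS_succ (bc (x+1)) H (N+1)]
      have hp : bc (x+1) (N+1) = bc x (N+1) - bc x N := bc_pascal x N
      rw [hp]
      simp only [map_sub]
      ring

/-- `(1 - H) * (1-H)^x = (1-H)^(x+1)` -/
lemma one_sub_mul_seriesComp (x : ℝ) {H : PowerSeries ℝ} (hH : constantCoeff H = 0) :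
    (1 - H) * seriesComp (bc x) H = seriesComp (bc (x + 1)) H := by
  ext n
  rw [coeff_mul_seriesComp _ _ hH, one_sub_mul_partS,
    coeff_seriesComp_eq (bc (x+1)) hH (Nat.lt_succ_self n), map_sub]
  have : coeff n (PowerSeries.C (bc x n) * H ^ (n+1)) = 0 := by
    rw [coeff_C_mul, coeff_pow_lt hH (Nat.lt_succ_self n), mul_zero]
  rw [this, sub_zero]

lemma deriv_partS (x : ℝ) (H : PowerSeries ℝ) (N : ℕ) :
    d⁄dX ℝ (PartS (bc x) H (N + 1))
      = PowerSeries.C (-x) * (d⁄dX ℝ H * PartS (bc (x - 1)) H N) := by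
  rw [PartS, map_sum]
  have hterm : ∀ k, d⁄dX ℝ (PowerSeries.C (bc x k) * H ^ k)
      = PowerSeries.C (bc x k) * (k • (H ^ (k-1) * d⁄dX ℝ H)) := by
    intro k
    rw [Derivation.leibniz, Derivation.leibniz_pow]
    simp [smul_smul, mul_comm]
  rw [Finset.sum_congr rfl (fun k _ => hterm k)]
  rw [Finset.sum_range_succ']
  simp only [zero_smul, mul_zero, add_zero, Nat.add_sub_cancel]
  have hterm2 : ∀ k, PowerSeries.C (bc x (k+1)) * ((k+1) • (H ^ k * d⁄dX ℝ H))
      = PowerSeries.C (-x) * (d⁄dX ℝ H * (PowerSeries.C (bc (x-1) k) * H ^ k)) := by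
    intro k
    rw [nsmul_eq_mul]
    have : ((k+1 : ℕ) : ℝ⟦X⟧) = PowerSeries.C ((k:ℝ)+1) := by
      rw [← map_natCast (PowerSeries.C (R := ℝ)) (k+1)]; push_cast; ring_nf
    rw [this]
    have hb : bc x (k+1) * ((k:ℝ)+1) = -x * bc (x-1) k := bc_deriv x k
    calc PowerSeries.C (bc x (k+1)) * (PowerSeries.C ((k:ℝ)+1) * (H ^ k * d⁄dX ℝ H))
        = PowerSeries.C (bc x (k+1) * ((k:ℝ)+1)) * (H ^ k * d⁄dX ℝ H) := by
          rw [map_mul]; ring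
      _ = PowerSeries.C (-x * bc (x-1) k) * (H ^ k * d⁄dX ℝ H) := by rw [hb]
      _ = _ := by rw [map_mul]; ring
  rw [Finset.sum_congr rfl (fun k _ => hterm2 k)]
  rw [PartS, Finset.mul_sum, Finset.mul_sum]


/-- chain rule: `((1-H)^x)' = -x H' (1-H)^(x-1)` -/
lemma deriv_seriesComp (x : ℝ) {H : PowerSeries ℝ} (hH : constantCoeff H = 0) :
    d⁄dX ℝ (seriesComp (bc x) H)
      = PowerSeries.C (-x) * (d⁄dX ℝ H * seriesComp (bc (x - 1)) H) := by
  ext n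
  rw [coeff_derivative, coeff_seriesComp_eq (bc x) hH (Nat.lt_succ_self (n+1)),
    ← coeff_derivative, deriv_partS, coeff_C_mul, coeff_C_mul,
    coeff_mul_seriesComp _ _ hH]

lemma constantCoeff_seriesComp (c : ℕ → ℝ) (H : PowerSeries ℝ) :
    constantCoeff (seriesComp c H) = c 0 := by
  rw [← coeff_zero_eq_constantCoeff_apply, seriesComp, coeff_mk]
  simp

/-- **Solution of the increasing-tree differential equation `T' = (1−T)^{−α}`.**
If `T` is a formal power series with zero constant term satisfying
`T'·(1−T)^α = 1` (with `(1−T)^α = ∑_k C(α,k)(−1)^k T^k` the binomial series),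
then `n!·[zⁿ]T(z) = (α+1)^{n-1}(n−1)! C(n−1−1/(α+1), n−1)` for all `n ≥ 1`;
in particular `T(z) = 1 − (1−(α+1)z)^{1/(α+1)}` as a formal binomial series. -/
theorem increasing_trees_ode_solution
    (α : ℝ) (hα : 0 < α) (T : PowerSeries ℝ)
    (hT0 : PowerSeries.constantCoeff T = 0)
    (hode : PowerSeries.derivative ℝ T
        * seriesComp (fun k => genBinom α k * (-1 : ℝ) ^ k) T = 1) :
    (∀ n : ℕ, 1 ≤ n →
      (Nat.factorial n : ℝ) * (PowerSeries.coeff n) T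
        = (α + 1) ^ (n - 1) * (Nat.factorial (n - 1) : ℝ)
            * genBinom ((n : ℝ) - 1 - 1 / (α + 1)) (n - 1))
    ∧ T = 1 - PowerSeries.mk (fun k => genBinom (1 / (α + 1)) k * (-(α + 1)) ^ k) := by
  have hα1 : (α + 1) ≠ 0 := by positivity
  have hode' : d⁄dX ℝ T * seriesComp (bc α) T = 1 := hode
  -- Step A
  have hV : (1 - T) * seriesComp (bc α) T = 1 - PowerSeries.C (α+1) * X := by
    apply derivative.ext
    · rw [Derivation.leibniz]
      rw [deriv_seriesComp α hT0]
      have hone : (1 : ℝ⟦X⟧) - T = 1 - T := rfl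
      have hDsub : d⁄dX ℝ (1 - T) = - d⁄dX ℝ T := by
        rw [map_sub, Derivation.map_one_eq_zero, zero_sub]
      have hcomb : (1 - T) • (PowerSeries.C (-α) * (d⁄dX ℝ T * seriesComp (bc (α-1)) T))
          = PowerSeries.C (-α) * (d⁄dX ℝ T * ((1 - T) * seriesComp (bc (α-1)) T)) := by
        rw [smul_eq_mul]; ring
      rw [hcomb, one_sub_mul_seriesComp (α-1) hT0]
      have : α - 1 + 1 = α := by ring
      rw [this, hode', mul_one, hDsub]
      have hG : seriesComp (bc α) T • (-d⁄dX ℝ T) = -(d⁄dX ℝ T * seriesComp (bc α) T) := by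
        rw [smul_eq_mul]; ring
      rw [hG, hode']
      -- RHS derivative
      rw [map_sub, Derivation.map_one_eq_zero, Derivation.leibniz, derivative_C, derivative_X]
      simp only [smul_eq_mul, mul_one, mul_zero, add_zero, zero_sub, map_neg, map_add, map_one]
      ring
    · rw [map_mul, map_sub, map_one, hT0, constantCoeff_seriesComp, bc_zero]
      simp
  -- Step B
  have hlin : (1 - PowerSeries.C (α+1) * X) * d⁄dX ℝ T = 1 - T := by
    rw [← hV]
    calc (1 - T) * seriesComp (bc α) T * d⁄dX ℝ T
        = (1 - T) * (d⁄dX ℝ T * seriesComp (bc α) T) := by ring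
      _ = 1 - T := by rw [hode', mul_one]
  -- Step C: coefficient recurrence
  have hCn : ∀ n : ℕ, coeff n ((1 - PowerSeries.C (α+1) * X) * d⁄dX ℝ T)
      = coeff n (d⁄dX ℝ T) - (α+1) * coeff n (X * d⁄dX ℝ T) := by
    intro n
    rw [sub_mul, one_mul, map_sub, mul_assoc, coeff_C_mul]
  have h0 : coeff 1 T = 1 := by
    have := congrArg (coeff 0) hlin
    rw [hCn 0, map_sub, coeff_derivative] at this
    simp only [coeff_zero_eq_constantCoeff_apply, map_mul, constantCoeff_X, zero_mul,
      mul_zero, map_one, hT0, sub_zero, Nat.cast_zero] at this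
    simpa using this
  have hrec : ∀ m : ℕ, coeff (m + 2) T * ((m:ℝ) + 2)
      = ((α+1) * ((m:ℝ)+1) - 1) * coeff (m + 1) T := by
    intro m
    have := congrArg (coeff (m+1)) hlin
    rw [hCn (m+1), coeff_succ_X_mul, coeff_derivative, coeff_derivative, map_sub] at this
    have h1 : coeff (m+1) (1 : ℝ⟦X⟧) = 0 := by
      rw [coeff_one]; simp
    rw [h1] at this
    push_cast at this ⊢
    linarith
  -- Step D: closed form for coefficients
  set P : ℕ → ℝ := fun m => ∏ i ∈ Finset.range m, ((α+1) * ((i:ℝ)+1) - 1) with hP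
  set a : ℕ → ℝ := fun n => if n = 0 then 0 else P (n-1) / (Nat.factorial n : ℝ) with ha
  have hfact : ∀ n : ℕ, ((Nat.factorial n : ℕ) : ℝ) ≠ 0 :=
    fun n => Nat.cast_ne_zero.2 (Nat.factorial_ne_zero n)
  have key : ∀ n : ℕ, coeff n T = a n := by
    intro n
    induction n with
    | zero => simpa [ha] using hT0
    | succ n ih =>
        cases n with
        | zero => simpa [ha, hP] using h0
        | succ m =>
            have hm2 : ((m:ℝ) + 2) ≠ 0 := by positivity
            have hstep := hrec m
            rw [ih] at hstep
            have haval : a (m+1) = P m / (Nat.factorial (m+1) : ℝ) := by simp [ha]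
            have haval2 : a (m+2) = P (m+1) / (Nat.factorial (m+2) : ℝ) := by simp [ha]
            have hPstep : P (m+1) = P m * ((α+1) * ((m:ℝ)+1) - 1) := by
              rw [hP]; exact Finset.prod_range_succ _ _
            have hfs : ((Nat.factorial (m+2) : ℕ) : ℝ)
                = ((m:ℝ)+2) * (Nat.factorial (m+1) : ℝ) := by
              rw [show m+2 = (m+1)+1 from rfl, Nat.factorial_succ]; push_cast; ring
            have : a (m+2) * ((m:ℝ)+2) = ((α+1) * ((m:ℝ)+1) - 1) * a (m+1) := by
              rw [haval, haval2, hPstep, hfs]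
              field_simp
            have := hstep.trans this.symm
            exact mul_right_cancel₀ hm2 this
  -- β facts
  set β : ℝ := 1 / (α + 1) with hβdef
  have hβ : (α + 1) * β = 1 := by rw [hβdef]; field_simp
  -- closed form for P
  have hPm : ∀ m : ℕ, P m = (α+1)^m * ((Nat.factorial m : ℝ) * genBinom ((m:ℝ) - β) m) := by
    intro m
    have hgb : (Nat.factorial m : ℝ) * genBinom ((m:ℝ) - β) m
        = ∏ j ∈ Finset.range m, (((m:ℝ) - β) - j) := by
      rw [genBinom]
      field_simp
    rw [hgb]
    calc P m = ∏ j ∈ Finset.range m, ((α+1) * (((m - 1 - j : ℕ):ℝ)+1) - 1) :=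
          (Finset.prod_range_reflect (fun j => (α+1) * ((j:ℝ)+1) - 1) m).symm
      _ = ∏ j ∈ Finset.range m, ((α+1) * (((m:ℝ) - β) - j)) := by
          apply Finset.prod_congr rfl
          intro j hj
          have hj' : j < m := Finset.mem_range.1 hj
          have h1 : j + 1 ≤ m := hj'
          have hc : ((m - 1 - j : ℕ):ℝ) = (m:ℝ) - 1 - j := by
            rw [Nat.sub_sub, Nat.add_comm, Nat.cast_sub h1]
            push_cast; ring
          rw [hc]
          linear_combination hβ
      _ = (α+1)^m * ∏ j ∈ Finset.range m, (((m:ℝ) - β) - j) := by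
          rw [Finset.prod_mul_distrib, Finset.prod_const, Finset.card_range]
  constructor
  · intro n hn
    obtain ⟨m, rfl⟩ : ∃ m, n = m + 1 := ⟨n - 1, (Nat.succ_pred_eq_of_pos hn).symm⟩
    rw [key]
    have haval : a (m+1) = P m / (Nat.factorial (m+1) : ℝ) := by simp [ha]
    rw [haval]
    have hcast : ((m+1:ℕ):ℝ) - 1 - β = (m:ℝ) - β := by push_cast; ring
    simp only [Nat.add_sub_cancel, hcast]
    rw [hPm m]
    field_simp
  · ext n
    rw [key, map_sub, coeff_mk]
    cases n with
    | zero =>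
        simp [ha, genBinom_zero]
    | succ m =>
        have h1 : coeff (m+1) (1 : ℝ⟦X⟧) = 0 := by rw [coeff_one]; simp
        rw [h1, zero_sub]
        have haval : a (m+1) = P m / (Nat.factorial (m+1) : ℝ) := by simp [ha]
        rw [haval]
        have hprod : genBinom β (m+1) * (-(α+1))^(m+1)
            = (∏ i ∈ Finset.range (m+1), ((β - i) * (-(α+1)))) / (Nat.factorial (m+1) : ℝ) := by
          rw [genBinom, Finset.prod_mul_distrib, Finset.prod_const, Finset.card_range]
          ring
        have hterm : ∀ i : ℕ, (β - (i:ℝ)) * (-(α+1)) = (α+1) * i - 1 := by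
          intro i
          linear_combination (-1 : ℝ) * hβ
        have hsplit : ∏ i ∈ Finset.range (m+1), ((β - (i:ℝ)) * (-(α+1))) = - P m := by
          rw [Finset.prod_congr rfl (fun i _ => hterm i), Finset.prod_range_succ']
          simp only [Nat.cast_zero, mul_zero, zero_sub]
          rw [hP]
          push_cast
          ring
        rw [hprod, hsplit]
        ring
end
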